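/- The map 𝓜 is equal to each of the following four maps: K·(Σ_{n=0}^d a^{−n}q^{−n}ψ^n), (Σ_{n=0}^d a^{−n}q^{n}ψ^n)·K, B·(Σ_{n=0}^d a^{n}q^{−n}ψ^n), and (Σ_{n=0}^d a^{n}q^{n}ψ^n)·B. -/

import Mathlib

theorem stmt_1
    {𝕂 : Type*} [Field 𝕂] {V : Type*} [AddCommGroup V] [Module 𝕂 V]
    [FiniteDimensional 𝕂 V]
    (d : ℕ) (hd : 1 ≤ d) (q a : 𝕂) (hq : q ≠ 0) (ha : a ≠ 0)
    (hq2 : ∀ i : ℕ, 1 ≤ i → i ≤ d → q ^ (2 * i) ≠ 1)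
    (ha2 : ∀ i : ℤ, 1 - (d : ℤ) ≤ i → i ≤ (d : ℤ) - 1 → a ^ 2 ≠ q ^ (2 * i))
    (K : Module.End 𝕂 V) (hK : IsUnit K)
    (U : ℕ → Submodule 𝕂 V)
    (hUne : ∀ i, i ≤ d → U i ≠ ⊥)
    (hUint : DirectSum.IsInternal (fun i : Fin (d + 1) => U i.1))
    (hKU : ∀ i, i ≤ d → ∀ v ∈ U i, K v = (q ^ ((d : ℤ) - 2 * (i : ℤ))) • v)
    (ψ : Module.End 𝕂 V)
    (hψ0 : ∀ v ∈ U 0, ψ v = 0)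
    (hψU : ∀ i, 1 ≤ i → i ≤ d → ∀ v ∈ U i, ψ v ∈ U (i - 1))
    (hψnil : ψ ^ (d + 1) = 0)
    (hKψ : K * ψ = q ^ 2 • (ψ * K))
    (hinv : ∀ x : 𝕂, IsUnit (1 - x • ψ))
    (B : Module.End 𝕂 V)
    (hB : B = (1 - (a * q) • ψ) * Ring.inverse (1 - (a⁻¹ * q) • ψ) * K)
    (M : Module.End 𝕂 V)
    (hM : M = (a - a⁻¹)⁻¹ • (a • K - a⁻¹ • B))
    (hMunit : IsUnit M):
    M = K * (∑ n ∈ Finset.range (d + 1), (a⁻¹ ^ n * q⁻¹ ^ n) • ψ ^ n) ∧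
    M = (∑ n ∈ Finset.range (d + 1), (a⁻¹ ^ n * q ^ n) • ψ ^ n) * K ∧
    M = B * (∑ n ∈ Finset.range (d + 1), (a ^ n * q⁻¹ ^ n) • ψ ^ n) ∧
    M = (∑ n ∈ Finset.range (d + 1), (a ^ n * q ^ n) • ψ ^ n) * B := by
  -- notation for geometric sums
  set G : 𝕂 → Module.End 𝕂 V := fun x => ∑ n ∈ Finset.range (d + 1), (x • ψ) ^ n with hG
  have hnil : ∀ x : 𝕂, (x • ψ) ^ (d + 1) = 0 := by
    intro x; rw [smul_pow, hψnil, smul_zero]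
  have hgeom1 : ∀ x : 𝕂, (1 - x • ψ) * G x = 1 := by
    intro x
    have h := mul_geom_sum (x • ψ) (d + 1)
    rw [hnil x, zero_sub] at h
    simp only [hG]
    rw [← neg_sub (x • ψ) (1 : Module.End 𝕂 V), neg_mul, h, neg_neg]
  have hgeom2 : ∀ x : 𝕂, G x * (1 - x • ψ) = 1 := by
    intro x
    have h := geom_sum_mul (x • ψ) (d + 1)
    rw [hnil x, zero_sub] at h
    simp only [hG]
    rw [← neg_sub (x • ψ) (1 : Module.End 𝕂 V), mul_neg, h, neg_neg]
  have hinvEq : ∀ x : 𝕂, Ring.inverse (1 - x • ψ) = G x := by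
    intro x
    have hu : Ring.inverse (1 - x • ψ) * ((1 - x • ψ) * G x) =
        Ring.inverse (1 - x • ψ) := by rw [hgeom1, mul_one]
    rw [← mul_assoc, Ring.inverse_mul_cancel _ (hinv x), one_mul] at hu
    exact hu.symm
  -- commutation of K and powers of ψ
  have hcomm : ∀ n : ℕ, K * ψ ^ n = ((q ^ 2) ^ n) • (ψ ^ n * K) := by
    intro n
    induction n with
    | zero => simp
    | succ n ih =>
      calc K * ψ ^ (n + 1) = (K * ψ ^ n) * ψ := by rw [pow_succ, mul_assoc]
        _ = ((q ^ 2) ^ n) • (ψ ^ n * K * ψ) := by rw [ih, smul_mul_assoc]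
        _ = ((q ^ 2) ^ n) • (ψ ^ n * (K * ψ)) := by rw [mul_assoc]
        _ = ((q ^ 2) ^ n) • (ψ ^ n * (q ^ 2 • (ψ * K))) := by rw [hKψ]
        _ = ((q ^ 2) ^ (n + 1)) • (ψ ^ (n + 1) * K) := by
            rw [mul_smul_comm, smul_smul, ← mul_assoc, ← pow_succ, ← pow_succ]
  have hKG : ∀ x : 𝕂, K * G x = G (x * q ^ 2) * K := by
    intro x
    rw [hG]
    simp only [Finset.mul_sum, Finset.sum_mul]
    refine Finset.sum_congr rfl fun n _ => ?_
    calc K * (x • ψ) ^ n = K * (x ^ n • ψ ^ n) := by rw [smul_pow]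
      _ = x ^ n • (K * ψ ^ n) := by rw [mul_smul_comm]
      _ = x ^ n • ((q ^ 2) ^ n • (ψ ^ n * K)) := by rw [hcomm]
      _ = ((x * q ^ 2) ^ n) • (ψ ^ n * K) := by rw [smul_smul, mul_pow]
      _ = ((x * q ^ 2) • ψ) ^ n * K := by rw [smul_pow, smul_mul_assoc]
  -- commutation of geometric sums
  have hGcomm : ∀ x z : 𝕂, G x * G z = G z * G x := by
    intro x z
    have hxz : Commute (x • ψ) (z • ψ) :=
      ((Commute.refl ψ).smul_left x).smul_right z
    have h1 : ∀ j : ℕ, Commute (G x) ((z • ψ) ^ j) := fun j =>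
      Commute.sum_left _ _ _ (fun i _ => hxz.pow_pow i j)
    exact Commute.sum_right _ _ _ (fun j _ => h1 j)
  -- a - a⁻¹ ≠ 0
  have haa : a - a⁻¹ ≠ 0 := by
    intro h
    have h1 : a = a⁻¹ := sub_eq_zero.mp h
    have h2 : a ^ 2 = 1 := by
      rw [sq]; nth_rw 2 [h1]; exact mul_inv_cancel₀ ha
    exact ha2 0 (by omega) (by omega) (by rw [h2]; simp)
  -- sums rewriting
  have hsum : ∀ x z : 𝕂, (∑ n ∈ Finset.range (d + 1), (x ^ n * z ^ n) • ψ ^ n) = G (x * z) := by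
    intro x z
    rw [hG]
    refine Finset.sum_congr rfl fun n _ => ?_
    rw [smul_pow, mul_pow]
  -- the key formula: M = G (a⁻¹ * q) * K
  have hMG : M = G (a⁻¹ * q) * K := by
    rw [hM, hB, hinvEq (a⁻¹ * q), mul_assoc]
    set P := G (a⁻¹ * q) * K with hP
    have hK' : K = (1 - (a⁻¹ * q) • ψ) * P := by
      rw [hP, ← mul_assoc, hgeom1, one_mul]
    rw [hK']
    simp only [sub_mul, one_mul, smul_mul_assoc, smul_sub, smul_smul]
    have haa2 : a * a - 1 ≠ 0 := by
      intro h'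
      apply haa
      have h1 : a * a = 1 := sub_eq_zero.mp h'
      have h2 : a⁻¹ = a := inv_eq_of_mul_eq_one_left h1
      rw [h2, sub_self]
    have haa3 : -1 + a ^ 2 ≠ 0 := by rw [neg_add_eq_sub, sq]; exact haa2
    match_scalars <;> field_simp <;> ring_nf <;> field_simp [haa3] <;> ring
  have hq1 : a⁻¹ * q⁻¹ * q ^ 2 = a⁻¹ * q := by field_simp
  have hq2' : a * q⁻¹ * q ^ 2 = a * q := by field_simp
  refine ⟨?_, ?_, ?_, ?_⟩
  · rw [hsum a⁻¹ q⁻¹, hKG, hq1, hMG]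
  · rw [hsum a⁻¹ q, hMG]
  · rw [hsum a q⁻¹, hMG, hB, hinvEq (a⁻¹ * q)]
    symm
    calc (1 - (a * q) • ψ) * G (a⁻¹ * q) * K * G (a * q⁻¹)
        = (1 - (a * q) • ψ) * (G (a⁻¹ * q) * (K * G (a * q⁻¹))) := by
          rw [mul_assoc, mul_assoc]
      _ = (1 - (a * q) • ψ) * (G (a⁻¹ * q) * (G (a * q) * K)) := by
          rw [hKG, hq2']
      _ = (1 - (a * q) • ψ) * G (a * q) * (G (a⁻¹ * q) * K) := by
          rw [← mul_assoc (G (a⁻¹ * q)), hGcomm, mul_assoc, ← mul_assoc]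
      _ = G (a⁻¹ * q) * K := by rw [hgeom1, one_mul]
  · rw [hsum a q, hMG, hB, hinvEq (a⁻¹ * q)]
    symm
    calc G (a * q) * ((1 - (a * q) • ψ) * G (a⁻¹ * q) * K)
        = G (a * q) * (1 - (a * q) • ψ) * G (a⁻¹ * q) * K := by
          rw [mul_assoc, mul_assoc, mul_assoc]
      _ = G (a⁻¹ * q) * K := by rw [hgeom2, one_mul]
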